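/- Let A ∈ GL(n, ℂ) be a matrix all of whose eigenvalues are roots of unity. Then the linear map F(x) = Ax has the finite orbits property: for every bounded neighborhood B of 0 and every p ∈ B, the orbit of p by F in B is finite. -/

import Mathlib

open Topology Filter

/-- The orbit of `p` by `F` (with inverse `Finv`) inside `A`: all forward and backward
iterates of `p` whose intermediate iterates stay in `A`. -/
def orbitIn {n : ℕ} (F Finv : (Fin n → ℂ) → (Fin n → ℂ)) (A : Set (Fin n → ℂ))
    (p : Fin n → ℂ) : Set (Fin n → ℂ) :=
  {q | ∃ j : ℕ, q = F^[j] p ∧ ∀ k ≤ j, F^[k] p ∈ A} ∪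
  {q | ∃ j : ℕ, q = Finv^[j] p ∧ ∀ k ≤ j, Finv^[k] p ∈ A}

/-- `F` has finite orbits in `A`. -/
def FiniteOrbitsIn {n : ℕ} (F Finv : (Fin n → ℂ) → (Fin n → ℂ)) (A : Set (Fin n → ℂ)) : Prop :=
  ∀ p ∈ A, (orbitIn F Finv A p).Finite

open Matrix

lemma mulVec_iterate_aux {n : ℕ} (M : Matrix (Fin n) (Fin n) ℂ) (p : Fin n → ℂ) (j : ℕ) :
    M.mulVec^[j] p = (M ^ j) *ᵥ p := by
  induction j with
  | zero => simp [Matrix.one_mulVec]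
  | succ j ih =>
      rw [Function.iterate_succ_apply', ih]
      show M *ᵥ ((M ^ j) *ᵥ p) = _
      rw [Matrix.mulVec_mulVec, ← pow_succ']

lemma forward_orbit_finite_aux {n : ℕ} (M : Matrix (Fin n) (Fin n) ℂ) (K : ℕ) (hK : 1 ≤ K)
    (hnil : IsNilpotent (M ^ K - 1)) {B : Set (Fin n → ℂ)} (hB : Bornology.IsBounded B)
    (p : Fin n → ℂ) :
    {q | ∃ j : ℕ, q = M.mulVec^[j] p ∧ ∀ k ≤ j, M.mulVec^[k] p ∈ B}.Finite := by
  classical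
  by_cases hp : (M ^ K) *ᵥ p = p
  · -- periodic case
    have key : ∀ j, (M ^ j) *ᵥ p = (M ^ (j % K)) *ᵥ p := by
      intro j
      induction j using Nat.strong_induction_on with
      | _ j ih =>
        by_cases h : j < K
        · rw [Nat.mod_eq_of_lt h]
        · push_neg at h
          have h1 : j = (j - K) + K := (Nat.sub_add_cancel h).symm
          have h2 : (M ^ j) *ᵥ p = (M ^ (j - K)) *ᵥ p := by
            conv_lhs => rw [h1, pow_add, ← Matrix.mulVec_mulVec, hp]
          rw [h2, ih (j - K) (by omega), Nat.mod_eq_sub_mod h]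
    apply Set.Finite.subset ((Set.finite_Iio K).image fun j => M.mulVec^[j] p)
    rintro x ⟨j, rfl, -⟩
    refine ⟨j % K, Nat.mod_lt _ (by omega), ?_⟩
    simp only [mulVec_iterate_aux]
    exact (key j).symm
  · -- escaping case
    obtain ⟨C, hC⟩ := isBounded_iff_forall_norm_le.mp hB
    set N := M ^ K - 1 with hNdef
    have hNp : N *ᵥ p ≠ 0 := by
      rw [hNdef, Matrix.sub_mulVec, Matrix.one_mulVec, sub_ne_zero]
      exact hp
    obtain ⟨e, he⟩ := hnil
    have heE : N ^ (e + 1) = 0 := by rw [pow_succ, he, zero_mul]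
    set P : ℕ → Prop := fun i => (N ^ i) *ᵥ p ≠ 0 with hPdef
    set d := Nat.findGreatest P (e + 1) with hd
    have hP1 : P 1 := by simpa [hPdef, pow_one] using hNp
    have hd1 : 1 ≤ d := Nat.le_findGreatest (by omega) hP1
    have hPd : P d := Nat.findGreatest_spec (m := 1) (by omega) hP1
    have hPd1 : (N ^ (d + 1)) *ᵥ p = 0 := by
      by_cases h : d + 1 ≤ e + 1
      · have := Nat.findGreatest_is_greatest (P := P) (n := e + 1) (by omega) h
        rw [hPdef] at this
        simpa using this
      · have hde : d = e + 1 := le_antisymm (Nat.findGreatest_le _) (by omega)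
        have : N ^ (d + 1) = 0 := by
          rw [hde, pow_succ', heE, mul_zero]
        rw [this, Matrix.zero_mulVec]
    obtain ⟨c, hc⟩ : ∃ c, d = c + 1 := ⟨d - 1, by omega⟩
    set q : Fin n → ℂ := (N ^ c) *ᵥ p with hq
    have hNq : N *ᵥ q = (N ^ d) *ᵥ p := by
      rw [hq, Matrix.mulVec_mulVec, ← pow_succ', ← hc]
    have hNq0 : N *ᵥ q ≠ 0 := by rw [hNq]; exact hPd
    have hNNq : N *ᵥ (N *ᵥ q) = 0 := by
      rw [hNq, Matrix.mulVec_mulVec, ← pow_succ', hPd1]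
    have hGcomm : Commute (M ^ K) N := by
      rw [hNdef]
      exact (Commute.refl _).sub_right (Commute.one_right _)
    have hGc : Commute (N ^ c) (M ^ K) := (hGcomm.symm.pow_left c)
    have hG : M ^ K = 1 + N := by rw [hNdef]; abel
    have claim : ∀ m : ℕ, (N ^ c) *ᵥ ((M ^ (K * m)) *ᵥ p) = q + (m : ℂ) • (N *ᵥ q) := by
      intro m
      induction m with
      | zero => simp [hq]
      | succ m ih =>
        have hpow : M ^ (K * (m + 1)) = M ^ K * M ^ (K * m) := by
          rw [← pow_add]; ring_nf
        rw [hpow, ← Matrix.mulVec_mulVec, Matrix.mulVec_mulVec (M := N ^ c),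
          hGc.eq, ← Matrix.mulVec_mulVec, ih, hG, Matrix.add_mulVec, Matrix.one_mulVec,
          Matrix.mulVec_add, Matrix.mulVec_smul, hNNq, smul_zero, add_zero]
        ext i
        simp only [Pi.add_apply, Pi.smul_apply, smul_eq_mul]
        push_cast
        ring
    obtain ⟨i, hi⟩ : ∃ i, (N *ᵥ q) i ≠ 0 := by
      by_contra h
      push_neg at h
      exact hNq0 (funext fun i => h i)
    set D : ℝ := (∑ j, ‖(N ^ c) i j‖) + 1 with hD
    have hD0 : 0 < D := by
      have : (0:ℝ) ≤ ∑ j, ‖(N ^ c) i j‖ :=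
        Finset.sum_nonneg fun j _ => norm_nonneg _
      rw [hD]; linarith
    have hbound : ∀ v : Fin n → ℂ, ‖((N ^ c) *ᵥ v) i‖ ≤ D * ‖v‖ := by
      intro v
      have h1 : ((N ^ c) *ᵥ v) i = ∑ j, (N ^ c) i j * v j := by
        simp [Matrix.mulVec, dotProduct]
      rw [h1]
      calc ‖∑ j, (N ^ c) i j * v j‖ ≤ ∑ j, ‖(N ^ c) i j * v j‖ := norm_sum_le _ _
        _ ≤ ∑ j, ‖(N ^ c) i j‖ * ‖v‖ := by
            apply Finset.sum_le_sum
            intro j _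
            rw [norm_mul]
            exact mul_le_mul_of_nonneg_left (norm_le_pi_norm v j) (norm_nonneg _)
        _ = (∑ j, ‖(N ^ c) i j‖) * ‖v‖ := by rw [Finset.sum_mul]
        _ ≤ D * ‖v‖ := by
            apply mul_le_mul_of_nonneg_right _ (norm_nonneg v)
            rw [hD]; linarith
    set R : ℝ := ‖(N *ᵥ q) i‖ with hR
    have hR0 : 0 < R := norm_pos_iff.mpr hi
    obtain ⟨m₀, hm₀⟩ := exists_nat_gt ((C * D + ‖q i‖) / R)
    have hm₀' : C * D + ‖q i‖ < (m₀ : ℝ) * R := by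
      rw [div_lt_iff₀ hR0] at hm₀
      linarith
    have hv : C < ‖(M ^ (K * m₀)) *ᵥ p‖ := by
      set v := (M ^ (K * m₀)) *ᵥ p with hvdef
      have h1 : ((N ^ c) *ᵥ v) i = q i + (m₀ : ℂ) * (N *ᵥ q) i := by
        rw [hvdef, claim m₀]
        simp [smul_eq_mul]
      have h2 : (m₀ : ℝ) * R - ‖q i‖ ≤ ‖((N ^ c) *ᵥ v) i‖ := by
        rw [h1]
        have h3 : ‖(m₀ : ℂ) * (N *ᵥ q) i‖ ≤ ‖q i + (m₀ : ℂ) * (N *ᵥ q) i‖ + ‖q i‖ := by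
          have := norm_add_le (q i + (m₀ : ℂ) * (N *ᵥ q) i) (-(q i))
          simpa using this
        have h4 : ‖(m₀ : ℂ) * (N *ᵥ q) i‖ = (m₀ : ℝ) * R := by
          rw [norm_mul, hR, Complex.norm_natCast]
        linarith
      have h5 := hbound v
      have h6 : C * D < D * ‖v‖ := by
        calc C * D < (m₀ : ℝ) * R - ‖q i‖ := by linarith
          _ ≤ ‖((N ^ c) *ᵥ v) i‖ := h2
          _ ≤ D * ‖v‖ := h5
      rw [mul_comm C D] at h6
      exact lt_of_mul_lt_mul_left h6 (le_of_lt hD0)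
    apply Set.Finite.subset ((Set.finite_Iio (K * m₀)).image fun j => M.mulVec^[j] p)
    rintro x ⟨j, rfl, hj⟩
    refine ⟨j, ?_, rfl⟩
    by_contra h
    rw [Set.mem_Iio, not_lt] at h
    have hmem := hj (K * m₀) h
    rw [mulVec_iterate_aux] at hmem
    exact absurd (hC _ hmem) (not_le.mpr hv)

lemma nilpotent_of_unity_aux {n : ℕ} (A : Matrix (Fin n) (Fin n) ℂ)
    (hroots : ∀ μ ∈ spectrum ℂ A, ∃ k : ℕ, 1 ≤ k ∧ μ ^ k = 1) :
    ∃ K : ℕ, 1 ≤ K ∧ IsNilpotent (A ^ K - 1) := by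
  classical
  have hspec : ∀ μ ∈ A.charpoly.roots, μ ∈ spectrum ℂ A := by
    intro μ hμ
    have hroot : A.charpoly.eval μ = 0 := (Polynomial.isRoot_of_mem_roots hμ)
    rw [spectrum.mem_iff]
    intro hunit
    have hdet : ((Matrix.charmatrix A).map (Polynomial.evalRingHom μ)).det = 0 := by
      rw [← RingHom.mapMatrix_apply, ← RingHom.map_det]
      exact hroot
    have hmap : (Matrix.charmatrix A).map (Polynomial.evalRingHom μ)
        = algebraMap ℂ (Matrix (Fin n) (Fin n) ℂ) μ - A := by
      ext i j
      by_cases h : i = j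
      · subst h
        simp [Matrix.charmatrix_apply_eq, Matrix.algebraMap_matrix_apply]
      · simp [Matrix.charmatrix_apply_ne _ _ _ h, Matrix.algebraMap_matrix_apply, h]
    rw [hmap] at hdet
    have := (Matrix.isUnit_iff_isUnit_det _).mp hunit
    rw [hdet] at this
    exact this.ne_zero rfl
  set f : ℂ → ℕ := fun μ => if h : ∃ k : ℕ, 1 ≤ k ∧ μ ^ k = 1 then h.choose else 1 with hf
  have hf1 : ∀ μ, 1 ≤ f μ := by
    intro μ
    rw [hf]
    dsimp only
    split_ifs with h
    · exact h.choose_spec.1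
    · exact le_refl 1
  have hfpow : ∀ μ ∈ A.charpoly.roots, μ ^ (f μ) = 1 := by
    intro μ hμ
    have h := hroots μ (hspec μ hμ)
    rw [hf]
    dsimp only
    rw [dif_pos h]
    exact h.choose_spec.2
  set K := ∏ μ ∈ A.charpoly.roots.toFinset, f μ with hK
  have hK1 : 1 ≤ K := Finset.one_le_prod' fun μ _ => hf1 μ
  refine ⟨K, hK1, ?_⟩
  have hroot1 : ∀ μ ∈ A.charpoly.roots, μ ^ K = 1 := by
    intro μ hμ
    obtain ⟨t, ht⟩ := Finset.dvd_prod_of_mem f (Multiset.mem_toFinset.mpr hμ)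
    rw [hK, ht, pow_mul, hfpow μ hμ, one_pow]
  have hdvd : ∀ s : Multiset ℂ, (∀ μ ∈ s, μ ^ K = 1) →
      (s.map fun a => Polynomial.X - Polynomial.C a).prod ∣
        ((Polynomial.X : Polynomial ℂ) ^ K - 1) ^ Multiset.card s := by
    intro s
    induction s using Multiset.induction with
    | empty => intro _; simp
    | cons a s ih =>
      intro h
      rw [Multiset.map_cons, Multiset.prod_cons, Multiset.card_cons, pow_succ']
      apply mul_dvd_mul
      · rw [Polynomial.dvd_iff_isRoot]
        simp [Polynomial.IsRoot, h a (Multiset.mem_cons_self a s)]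
      · exact ih fun μ hμ => h μ (Multiset.mem_cons_of_mem hμ)
  have hsplit : A.charpoly
      = (A.charpoly.roots.map fun a => Polynomial.X - Polynomial.C a).prod :=
    Polynomial.Splits.eq_prod_roots_of_monic (IsAlgClosed.splits _)
      A.charpoly_monic
  have hdvd2 : A.charpoly ∣
      ((Polynomial.X : Polynomial ℂ) ^ K - 1) ^ Multiset.card A.charpoly.roots := by
    conv_lhs => rw [hsplit]
    exact hdvd _ hroot1
  obtain ⟨g, hg⟩ := hdvd2
  refine ⟨Multiset.card A.charpoly.roots, ?_⟩
  calc (A ^ K - 1) ^ Multiset.card A.charpoly.roots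
      = Polynomial.aeval A
        (((Polynomial.X : Polynomial ℂ) ^ K - 1) ^ Multiset.card A.charpoly.roots) := by
        simp [map_pow, map_sub]
    _ = 0 := by rw [hg, _root_.map_mul, Matrix.aeval_self_charpoly, zero_mul]

/-- If all eigenvalues of the invertible matrix `A` are roots of unity, then the linear map
`x ↦ Ax` has the finite orbits property in every bounded neighborhood of `0`. -/
theorem linear_finite_orbits_of_eigenvalues_root_of_unity {n : ℕ}
    (A : Matrix (Fin n) (Fin n) ℂ) (hA : IsUnit A.det)
    (hroots : ∀ μ ∈ spectrum ℂ A, ∃ k : ℕ, 1 ≤ k ∧ μ ^ k = 1) :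
    ∀ B ∈ 𝓝 (0 : Fin n → ℂ), Bornology.IsBounded B →
      ∀ p ∈ B, (orbitIn A.mulVec A⁻¹.mulVec B p).Finite := by
  intro B hB hBb p hp
  obtain ⟨K, hK1, hnil⟩ := nilpotent_of_unity_aux A hroots
  have hinv : IsNilpotent (A⁻¹ ^ K - 1) := by
    obtain ⟨e, he⟩ := hnil
    have hAA : A⁻¹ * A = 1 := Matrix.nonsing_inv_mul A hA
    have hAA' : A * A⁻¹ = 1 := Matrix.mul_nonsing_inv A hA
    have hcomm : Commute A A⁻¹ := by rw [Commute, SemiconjBy, hAA, hAA']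
    have hKinv : A⁻¹ ^ K * A ^ K = 1 := by
      rw [← hcomm.symm.mul_pow, hAA, one_pow]
    have heq : A⁻¹ ^ K - 1 = -(A⁻¹ ^ K * (A ^ K - 1)) := by
      rw [mul_sub, mul_one, hKinv, neg_sub]
    have hcomm2 : Commute (A⁻¹ ^ K) (A ^ K - 1) :=
      (hcomm.symm.pow_pow K K).sub_right (Commute.one_right _)
    refine ⟨e, ?_⟩
    rw [heq, neg_pow, hcomm2.mul_pow, he, mul_zero, mul_zero]
  have h1 := forward_orbit_finite_aux A K hK1 hnil hBb p
  have h2 := forward_orbit_finite_aux A⁻¹ K hK1 hinv hBb p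
  exact Set.Finite.union h1 h2
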